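/- Let C > 0 and N₀ > 0 be real constants and let A ∈ ℝ be fixed. The single-variable function B ↦ C / (B·(A − log₂(N₀·B))) is convex on the set {B ∈ ℝ : 0 < B and log₂(N₀·B) < A}, where log₂ is the base-2 logarithm. (This set is an interval, since log₂(N₀·B) is strictly increasing in B.) -/

import Mathlib

/-- Partial convexity (supporting Lemma 2): for fixed `A`, the function
`B ↦ C / (B·(A − log₂(N₀·B)))` is convex on `{B : 0 < B ∧ log₂(N₀·B) < A}`. -/
theorem stmt_5 (C N₀ A : ℝ) (hC : 0 < C) (hN₀ : 0 < N₀) :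
    ConvexOn ℝ {B : ℝ | 0 < B ∧ Real.logb 2 (N₀ * B) < A}
      (fun B => C / (B * (A - Real.logb 2 (N₀ * B)))) := by
  have hl2 : (0:ℝ) < Real.log 2 := Real.log_pos one_lt_two
  set L := Real.log 2 with hL
  -- the domain is the open interval (0, 2^A/N₀)
  have hS : {B : ℝ | 0 < B ∧ Real.logb 2 (N₀ * B) < A}
      = Set.Ioo 0 ((2:ℝ) ^ A / N₀) := by
    ext B
    simp only [Set.mem_setOf_eq, Set.mem_Ioo]
    constructor
    · rintro ⟨hB, hlog⟩
      refine ⟨hB, ?_⟩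
      have := (Real.logb_lt_iff_lt_rpow one_lt_two (by positivity)).mp hlog
      rw [lt_div_iff₀ hN₀]
      linarith [this]
    · rintro ⟨hB, hlt⟩
      refine ⟨hB, ?_⟩
      rw [Real.logb_lt_iff_lt_rpow one_lt_two (by positivity)]
      rw [lt_div_iff₀ hN₀] at hlt
      linarith [hlt]
  rw [hS]
  set g : ℝ → ℝ := fun x => A - Real.logb 2 (N₀ * x) with hg
  -- positivity of g on the interval
  have hgpos : ∀ x ∈ Set.Ioo (0:ℝ) ((2:ℝ) ^ A / N₀), 0 < g x := by
    rintro x ⟨hx0, hx1⟩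
    have : Real.logb 2 (N₀ * x) < A := by
      rw [Real.logb_lt_iff_lt_rpow one_lt_two (by positivity)]
      rw [lt_div_iff₀ hN₀] at hx1
      linarith
    simp only [hg]; linarith
  -- derivative of g
  have hgder : ∀ x : ℝ, 0 < x → HasDerivAt g (-(x * L)⁻¹) x := by
    intro x hx
    have h1 : HasDerivAt (fun y : ℝ => N₀ * y) N₀ x := by
      simpa using (hasDerivAt_id x).const_mul N₀
    have h2 : HasDerivAt (fun y : ℝ => Real.log (N₀ * y)) ((N₀ * x)⁻¹ * N₀) x :=
      (Real.hasDerivAt_log (by positivity)).comp x h1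
    have h3 : HasDerivAt (fun y : ℝ => Real.log (N₀ * y) / L) ((N₀ * x)⁻¹ * N₀ / L) x :=
      h2.div_const L
    have h4 : (N₀ * x)⁻¹ * N₀ / L = (x * L)⁻¹ := by
      field_simp
    have h5 : HasDerivAt (fun y : ℝ => Real.logb 2 (N₀ * y)) ((x * L)⁻¹) x := by
      rw [← h4]
      simpa [Real.logb, hL] using h3
    simpa [hg] using (h5.const_sub A)
  -- derivative of x ↦ x * g x
  have hPder : ∀ x : ℝ, 0 < x → HasDerivAt (fun y => y * g y) (g x - L⁻¹) x := by
    intro x hx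
    have hxne : x ≠ 0 := ne_of_gt hx
    have h : HasDerivAt (fun y => y * g y) (1 * g x + x * -(x * L)⁻¹) x :=
      (hasDerivAt_id x).mul (hgder x hx)
    convert h using 1
    field_simp
    ring
  -- the derivative of f
  set f' : ℝ → ℝ := fun x => (0 * (x * g x) - C * (g x - L⁻¹)) / (x * g x) ^ 2 with hf'def
  set f'' : ℝ → ℝ := fun x =>
    ((C * (x * L)⁻¹) * ((x * g x) ^ 2)
      - (0 * (x * g x) - C * (g x - L⁻¹)) * (2 * (x * g x) * (g x - L⁻¹)))
      / ((x * g x) ^ 2) ^ 2 with hf''def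
  have hconv : Convex ℝ (Set.Ioo (0:ℝ) ((2:ℝ) ^ A / N₀)) := convex_Ioo _ _
  have hint : interior (Set.Ioo (0:ℝ) ((2:ℝ) ^ A / N₀)) = Set.Ioo 0 ((2:ℝ) ^ A / N₀) :=
    interior_eq_iff_isOpen.mpr isOpen_Ioo
  -- first derivative
  have hf' : ∀ x ∈ Set.Ioo (0:ℝ) ((2:ℝ) ^ A / N₀),
      HasDerivAt (fun B => C / (B * (A - Real.logb 2 (N₀ * B)))) (f' x) x := by
    intro x hx
    have hx0 : 0 < x := hx.1
    have hgx : 0 < g x := hgpos x hx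
    have hne : x * g x ≠ 0 := by positivity
    exact (hasDerivAt_const x C).div (hPder x hx0) hne
  -- second derivative
  have hf'' : ∀ x ∈ Set.Ioo (0:ℝ) ((2:ℝ) ^ A / N₀),
      HasDerivAt f' (f'' x) x := by
    intro x hx
    have hx0 : 0 < x := hx.1
    have hgx : 0 < g x := hgpos x hx
    have hne : (x * g x) ^ 2 ≠ 0 := by positivity
    -- numerator derivative
    have hnum : HasDerivAt (fun y => 0 * (y * g y) - C * (g y - L⁻¹)) (C * (x * L)⁻¹) x := by
      have h1 : HasDerivAt (fun y => g y - L⁻¹) (-(x * L)⁻¹) x := (hgder x hx0).sub_const _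
      have h2 : HasDerivAt (fun y => C * (g y - L⁻¹)) (C * -(x * L)⁻¹) x := h1.const_mul C
      have h3 : HasDerivAt (fun y : ℝ => (0:ℝ) * (y * g y)) (0 * (g x - L⁻¹)) x :=
        (hPder x hx0).const_mul 0
      convert (show HasDerivAt (fun y => 0 * (y * g y) - C * (g y - L⁻¹)) _ x from h3.sub h2) using 1
      ring
    -- denominator derivative
    have hden : HasDerivAt (fun y => (y * g y) ^ 2) (2 * (x * g x) * (g x - L⁻¹)) x := by
      convert (show HasDerivAt (fun y => (y * g y) ^ 2) _ x from (hPder x hx0).pow 2) using 1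
      push_cast
      ring
    exact hnum.div hden hne
  -- nonnegativity of the second derivative
  have hf''nn : ∀ x ∈ Set.Ioo (0:ℝ) ((2:ℝ) ^ A / N₀), 0 ≤ f'' x := by
    intro x hx
    have hx0 : 0 < x := hx.1
    have hgx : 0 < g x := hgpos x hx
    simp only [hf''def]
    apply div_nonneg _ (by positivity)
    have hxne : x ≠ 0 := ne_of_gt hx0
    have hLne : L ≠ 0 := ne_of_gt hl2
    have key : (C * (x * L)⁻¹) * ((x * g x) ^ 2)
        - (0 * (x * g x) - C * (g x - L⁻¹)) * (2 * (x * g x) * (g x - L⁻¹))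
        = C * x * L⁻¹ * (g x) ^ 2 + 2 * C * x * (g x) * (g x - L⁻¹) ^ 2 := by
      field_simp
      ring
    rw [key]
    have h1 : 0 ≤ C * x * L⁻¹ * (g x) ^ 2 := by positivity
    have h2 : 0 ≤ 2 * C * x * (g x) * (g x - L⁻¹) ^ 2 := by positivity
    linarith
  exact convexOn_of_hasDerivWithinAt2_nonneg hconv
    (fun x hx => ((hf' x hx).continuousAt.continuousWithinAt))
    (fun x hx => by rw [hint] at hx ⊢; exact (hf' x hx).hasDerivWithinAt)
    (fun x hx => by rw [hint] at hx ⊢; exact (hf'' x hx).hasDerivWithinAt)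
    (fun x hx => by rw [hint] at hx; exact hf''nn x hx)
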